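/- Let k, n ≥ 1, let ρ be a nonzero linear form in R = 𝔽₂[t₁,…,t_k], let n_ρ > 1, and let (A_p)_{p∈V} be a ρ-cellular family of valence n_ρ consisting of n-element multisets. Then the family satisfies property (P) if and only if for every integer l ≥ 0 and every integer r with 1 ≤ r ≤ n_ρ − 1 one has Σ_{p∈V} σ_r(A_p^{(l)}) = 0 in R, where A_p^{(l)} denotes the multiset of l-th powers of the entries of A_p (with 0-th powers equal to 1). -/

import Mathlib

open MvPolynomial

noncomputable section

/-- The polynomial ring `R = 𝔽₂[t₁,…,t_k]`. -/
abbrev Rk (k : ℕ) : Type := MvPolynomial (Fin k) (ZMod 2)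

/-- Two `n`-element multisets (presented as tuples) are congruent mod `ρ` if there
is a multiplicity-preserving bijection matching elements that differ by a
multiple of `ρ`. -/
def CongMod {k n : ℕ} (ρ : Rk k) (A B : Fin n → Rk k) : Prop :=
  ∃ π : Equiv.Perm (Fin n), ∀ i, ρ ∣ A i - B (π i)

/-- Multiplicity of `ξ` in the tuple `A` (viewed as a multiset). -/
def cnt {k n : ℕ} (ξ : Rk k) (A : Fin n → Rk k) : ℕ :=
  Nat.card {i : Fin n // A i = ξ}

open scoped Classical in
/-- `Ifun S A` is the number of occurrences `I_A(S)` of the multiset `S` as a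
submultiset of (the multiset of entries of) `A`, counted with multiplicity:
`∏_ξ C(multiplicity of ξ in A, multiplicity of ξ in S)`. -/
def Ifun {k n : ℕ} (S : Multiset (Rk k)) (A : Fin n → Rk k) : ℕ :=
  ∏ ξ ∈ S.toFinset, Nat.choose (cnt ξ A) (S.count ξ)

/-- `esig n r x` is the `r`-th elementary symmetric polynomial of the entries of
the tuple `x`. -/
def esig {k : ℕ} (n r : ℕ) (x : Fin n → Rk k) : Rk k :=
  ∑ t ∈ Finset.powersetCard r Finset.univ, ∏ i ∈ t, x i

/-- A `ρ`-cellular family of valence `nρ`: a finite family, indexed by a finite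
set `V` of even cardinality, of `n`-element multisets of nonzero linear forms,
each containing `ρ` with multiplicity exactly `nρ`, all congruent mod `ρ`. -/
def Cellular {k n : ℕ} (ρ : Rk k) (nρ : ℕ) {V : Type} [Fintype V]
    (A : V → Fin n → Rk k) : Prop :=
  Even (Fintype.card V) ∧
  (∀ p i, A p i ≠ 0 ∧ (A p i).IsHomogeneous 1) ∧
  (∀ p, cnt ρ (A p) = nρ) ∧
  (∀ p q, CongMod ρ (A p) (A q))

/-- Property (P): for every multiset `S` of nonzero linear forms of cardinality
at most `nρ - 1` (including `S = ∅`), `∑_{p ∈ V} I_p(S)` is even. -/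
def PropP {k n : ℕ} (nρ : ℕ) {V : Type} [Fintype V]
    (A : V → Fin n → Rk k) : Prop :=
  ∀ S : Multiset (Rk k), (∀ ξ ∈ S, ξ ≠ 0 ∧ ξ.IsHomogeneous 1) → S.card ≤ nρ - 1 →
    Even (∑ p : V, Ifun S (A p))

/-! ### Auxiliary lemmas -/

section Aux

lemma degree_eq_one_single {σ : Type*} [DecidableEq σ] (d : σ →₀ ℕ) (h : d.degree = 1) :
    ∃ i, d = Finsupp.single i 1 := by
  have hc : Multiset.card d.toMultiset = 1 := by
    rw [Finsupp.card_toMultiset]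
    simpa [Finsupp.degree_apply, Finsupp.sum] using h
  obtain ⟨i, hi⟩ := Multiset.card_eq_one.mp hc
  refine ⟨i, ?_⟩
  have h2 := congrArg Multiset.toFinsupp hi
  rwa [Multiset.toFinsupp_singleton, Finsupp.toMultiset_toFinsupp] at h2

lemma zmod2_cases (x : ZMod 2) : x = 0 ∨ x = 1 := by revert x; decide

lemma linear_eq_sum_X {k : ℕ} {ℓ : Rk k} (h0 : ℓ ≠ 0) (h1 : ℓ.IsHomogeneous 1) :
    ∃ s : Finset (Fin k), s.Nonempty ∧ ℓ = ∑ i ∈ s, X i := by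
  classical
  set s : Finset (Fin k) := Finset.univ.filter (fun i => coeff (Finsupp.single i 1) ℓ = 1)
    with hs
  have heq : ℓ = ∑ i ∈ s, X i := by
    apply MvPolynomial.ext
    intro d
    rw [MvPolynomial.coeff_sum]
    by_cases hd : d.degree = 1
    · obtain ⟨i0, rfl⟩ := degree_eq_one_single d hd
      have : ∀ i ∈ s, coeff (Finsupp.single i0 1) (X i : Rk k)
          = if i = i0 then 1 else 0 := by
        intro i _
        rw [MvPolynomial.coeff_X']
        congr 1
        simp [Finsupp.single_left_inj (one_ne_zero)]
      rw [Finset.sum_congr rfl this, Finset.sum_ite_eq' s i0 (fun _ => (1 : ZMod 2))]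
      by_cases hi : i0 ∈ s
      · rw [if_pos hi]
        exact (Finset.mem_filter.mp hi).2
      · rw [if_neg hi]
        rcases zmod2_cases (coeff (Finsupp.single i0 1) ℓ) with h | h
        · exact h
        · exact absurd (Finset.mem_filter.mpr ⟨Finset.mem_univ i0, h⟩) hi
    · rw [h1.coeff_eq_zero hd]
      symm
      apply Finset.sum_eq_zero
      intro i _
      rw [MvPolynomial.coeff_X']
      rw [if_neg]
      intro hcon
      apply hd
      rw [← hcon]
      simp [Finsupp.degree_apply, Finsupp.support_single_ne_zero]
  refine ⟨s, ?_, heq⟩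
  rw [Finset.nonempty_iff_ne_empty]
  intro hcon
  apply h0
  rw [heq, hcon, Finset.sum_empty]

lemma prime_X_var {k : ℕ} (hk : 1 ≤ k) (j : Fin k) : Prime (X j : Rk k) := by
  induction k with
  | zero => omega
  | succ m _ =>
    have h0 : Prime (X (0 : Fin (m+1)) : Rk (m+1)) := by
      rw [← MulEquiv.prime_iff (MvPolynomial.finSuccEquiv (ZMod 2) m).toMulEquiv]
      have : (MvPolynomial.finSuccEquiv (ZMod 2) m).toMulEquiv (X 0) = Polynomial.X :=
        finSuccEquiv_X_zero
      rw [this]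
      exact Polynomial.prime_X
    rw [← MulEquiv.prime_iff (renameEquiv (ZMod 2) (Equiv.swap j 0)).toMulEquiv]
    have : (renameEquiv (ZMod 2) (Equiv.swap j 0)).toMulEquiv (X j : Rk (m+1)) = X 0 := by
      show (renameEquiv (ZMod 2) (Equiv.swap j 0)) (X j : Rk (m+1)) = X 0
      rw [renameEquiv_apply, rename_X, Equiv.swap_apply_left]
    rw [this]
    exact h0

lemma prime_linear {k : ℕ} {ℓ : Rk k} (h0 : ℓ ≠ 0) (h1 : ℓ.IsHomogeneous 1) :
    Prime ℓ := by
  classical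
  have hk : 1 ≤ k := by
    by_contra hcon
    interval_cases k
    apply h0
    obtain ⟨s, hs, heq⟩ := linear_eq_sum_X h0 h1
    obtain ⟨j, _⟩ := hs
    exact absurd j.2 (by omega)
  obtain ⟨s, hs, rfl⟩ := linear_eq_sum_X h0 h1
  obtain ⟨j, hj⟩ := hs
  set u : Fin k → Rk k := fun i => if i = j then ∑ i ∈ s, X i else X i with hu
  set φ : Rk k →ₐ[ZMod 2] Rk k := aeval u with hφ
  have hφX : ∀ i, φ (X i) = u i := fun i => aeval_X u i
  have hsum : φ (∑ i ∈ s, X i) = X j := by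
    rw [map_sum]
    have e1 : ∀ i, i ∈ s → φ (X i) = u i := fun i _ => hφX i
    rw [Finset.sum_congr rfl e1]
    rw [← Finset.add_sum_erase s u hj]
    have e2 : ∀ i ∈ s.erase j, u i = X i := by
      intro i hi
      rw [hu]
      simp only [if_neg (Finset.mem_erase.mp hi).1]
    rw [Finset.sum_congr rfl e2]
    have e3 : u j = ∑ i ∈ s, X i := by rw [hu]; simp
    rw [e3, ← Finset.add_sum_erase s X hj, add_assoc, CharTwo.add_self_eq_zero, add_zero]
  have hcomp : φ.comp φ = AlgHom.id (ZMod 2) (Rk k) := by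
    apply algHom_ext
    intro i
    rw [AlgHom.comp_apply, hφX i, AlgHom.id_apply]
    by_cases h : i = j
    · subst h
      have : u i = ∑ i ∈ s, X i := by rw [hu]; simp
      rw [this, hsum]
    · have : u i = X i := by rw [hu]; simp [h]
      rw [this, hφX i, this]
  set e : Rk k ≃ₐ[ZMod 2] Rk k := AlgEquiv.ofAlgHom φ φ hcomp hcomp with he
  rw [← MulEquiv.prime_iff e.toMulEquiv]
  have : e.toMulEquiv (∑ i ∈ s, X i) = X j := hsum
  rw [this]
  exact prime_X_var hk j

lemma assoc_eq {k : ℕ} {x y : Rk k} (hx0 : x ≠ 0) (hx : x.IsHomogeneous 1)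
    (hy : y.IsHomogeneous 1) (h : Associated x y) : x = y := by
  obtain ⟨u, hu⟩ := h
  set c : Rk k := (u : Rk k) with hc
  have hcne : c ≠ 0 := Units.ne_zero u
  have hcomp : ∀ m : ℕ, m ≠ 0 → homogeneousComponent m c = 0 := by
    intro m hm
    by_cases hbig : c.totalDegree < m
    · exact homogeneousComponent_eq_zero _ c hbig
    push_neg at hbig
    have hy0 : homogeneousComponent (1 + m) y = 0 := by
      rw [homogeneousComponent_of_mem ((mem_homogeneousSubmodule 1 y).mpr hy),
        if_neg (by omega)]
    have hdec : x * c = ∑ i ∈ Finset.range (c.totalDegree + 1),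
        x * homogeneousComponent i c := by
      rw [← Finset.mul_sum, sum_homogeneousComponent]
    have hcomp2 : homogeneousComponent (1 + m) (x * c)
        = x * homogeneousComponent m c := by
      rw [hdec, map_sum]
      have e1 : ∀ i ∈ Finset.range (c.totalDegree + 1),
          homogeneousComponent (1 + m) (x * homogeneousComponent i c)
            = if i = m then x * homogeneousComponent i c else 0 := by
        intro i _
        rw [homogeneousComponent_of_mem ((mem_homogeneousSubmodule _ _).mpr
          (hx.mul (homogeneousComponent_isHomogeneous i c)))]
        congr 1
        simp only [eq_iff_iff]
        omega
      rw [Finset.sum_congr rfl e1, Finset.sum_ite_eq' _ m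
        (fun i => x * homogeneousComponent i c), if_pos (Finset.mem_range.mpr (by omega))]
    have : x * homogeneousComponent m c = 0 := by rw [← hcomp2, hu]; exact hy0
    rcases mul_eq_zero.mp this with h | h
    · exact absurd h hx0
    · exact h
  have hcC : c = C (coeff 0 c) := by
    conv_lhs => rw [← sum_homogeneousComponent c]
    rw [← homogeneousComponent_zero c]
    apply Finset.sum_eq_single_of_mem 0 (Finset.mem_range.mpr (by omega))
    intro i _ hi
    exact hcomp i hi
  rcases zmod2_cases (coeff 0 c) with h | h
  · exact absurd (by rw [hcC, h, map_zero]) hcne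
  · have : c = 1 := by rw [hcC, h, map_one]
    rw [← hu, this, mul_one]

lemma prod_inj {k : ℕ} {S T : Multiset (Rk k)}
    (hS : ∀ ξ ∈ S, ξ ≠ 0 ∧ ξ.IsHomogeneous 1) (hT : ∀ ξ ∈ T, ξ ≠ 0 ∧ ξ.IsHomogeneous 1)
    (h : S.prod = T.prod) : S = T := by
  have hrel := prime_factors_unique (f := S) (g := T)
      (fun x hx => prime_linear (hS x hx).1 (hS x hx).2)
      (fun x hx => prime_linear (hT x hx).1 (hT x hx).2) (by rw [h]; exact Associated.refl _)
  rw [← Multiset.rel_eq]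
  exact hrel.mono (fun a ha b hb hab =>
    assoc_eq (hS a ha).1 (hS a ha).2 (hT b hb).2 hab)

lemma cnt_eq_card {k n : ℕ} (ξ : Rk k) (A : Fin n → Rk k) [DecidableEq (Rk k)] :
    cnt ξ A = (Finset.univ.filter (fun i => A i = ξ)).card := by
  rw [cnt, Nat.card_eq_fintype_card, Fintype.card_subtype]

lemma filter_card_eq_count {α β : Type*} [DecidableEq β] (t : Finset α) (A : α → β) (ξ : β) :
    (t.filter (fun i => A i = ξ)).card = Multiset.count ξ (Multiset.map A t.val) := by
  rw [Multiset.count_map, Finset.card_def, Finset.filter_val]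
  congr 1
  apply Multiset.filter_congr
  intro x _
  exact eq_comm

lemma countLemma {k n : ℕ} (A : Fin n → Rk k) (S : Multiset (Rk k)) {r : ℕ}
    (hS : Multiset.card S = r) :
    ((Finset.powersetCard r (Finset.univ : Finset (Fin n))).filter
      (fun t => Multiset.map A t.val = S)).card = Ifun S A := by
  classical
  rw [Ifun]
  have hpi := Finset.card_pi S.toFinset
    (fun ξ => (Finset.univ.filter (fun i => A i = ξ)).powersetCard (S.count ξ))
  rw [show ∏ ξ ∈ S.toFinset, Nat.choose (cnt ξ A) (S.count ξ)
      = ∏ ξ ∈ S.toFinset,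
        ((Finset.univ.filter (fun i => A i = ξ)).powersetCard (S.count ξ)).card  from ?_]
  swap
  · apply Finset.prod_congr rfl
    intro ξ _
    rw [Finset.card_powersetCard, cnt_eq_card]
  rw [← hpi]
  apply Finset.card_bij'
    (i := fun t _ => fun ξ _ => t.filter (fun i => A i = ξ))
    (j := fun g _ => S.toFinset.attach.biUnion (fun ξ => g ξ.1 ξ.2))
  · -- image lands in pi
    intro t ht
    rw [Finset.mem_filter] at ht
    obtain ⟨hcard, hmap⟩ := ht
    rw [Finset.mem_pi]
    intro ξ hξ
    rw [Finset.mem_powersetCard]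
    constructor
    · intro i hi
      rw [Finset.mem_filter] at hi ⊢
      exact ⟨Finset.mem_univ i, hi.2⟩
    · rw [filter_card_eq_count t A ξ, hmap]
  · -- inverse lands in the filter set
    intro g hg
    rw [Finset.mem_pi] at hg
    have hsub : ∀ ξ (hξ : ξ ∈ S.toFinset), g ξ hξ ⊆ Finset.univ.filter (fun i => A i = ξ) ∧
        (g ξ hξ).card = S.count ξ := by
      intro ξ hξ
      have := hg ξ hξ
      rw [Finset.mem_powersetCard] at this
      exact this
    set t := S.toFinset.attach.biUnion (fun ξ => g ξ.1 ξ.2) with htdef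
    have hfib : ∀ ξ₀, t.filter (fun i => A i = ξ₀)
        = if hξ : ξ₀ ∈ S.toFinset then g ξ₀ hξ else ∅ := by
      intro ξ₀
      ext i
      rw [Finset.mem_filter, htdef, Finset.mem_biUnion]
      constructor
      · rintro ⟨⟨ξ, _, hi⟩, hA⟩
        have hAi : A i = ξ.1 := ((hsub ξ.1 ξ.2).1 hi |> Finset.mem_filter.mp).2
        have : ξ₀ = ξ.1 := by rw [← hA, hAi]
        subst this
        rw [dif_pos ξ.2]
        exact hi
      · intro hi
        by_cases hξ : ξ₀ ∈ S.toFinset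
        · rw [dif_pos hξ] at hi
          refine ⟨⟨⟨ξ₀, hξ⟩, Finset.mem_attach _ _, hi⟩, ?_⟩
          exact ((hsub ξ₀ hξ).1 hi |> Finset.mem_filter.mp).2
        · rw [dif_neg hξ] at hi
          exact absurd hi (Finset.notMem_empty i)
    have hmap : Multiset.map A t.val = S := by
      ext ξ₀
      rw [Multiset.count_map, ← Multiset.count_map, ← filter_card_eq_count t A ξ₀, hfib ξ₀]
      by_cases hξ : ξ₀ ∈ S.toFinset
      · rw [dif_pos hξ, (hsub ξ₀ hξ).2]
      · rw [dif_neg hξ]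
        rw [Finset.card_empty]
        symm
        rw [Multiset.count_eq_zero]
        intro hcon
        exact hξ (Multiset.mem_toFinset.mpr hcon)
    rw [Finset.mem_filter]
    constructor
    · rw [Finset.mem_powersetCard_univ]
      have := congrArg Multiset.card hmap
      rw [Multiset.card_map, hS] at this
      exact this
    · exact hmap
  · -- left inverse
    intro t ht
    rw [Finset.mem_filter] at ht
    ext i
    rw [Finset.mem_biUnion]
    constructor
    · rintro ⟨ξ, _, hi⟩
      exact (Finset.mem_filter.mp hi).1
    · intro hi
      have hAi : A i ∈ S.toFinset := by
        rw [← ht.2, Multiset.mem_toFinset]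
        exact Multiset.mem_map_of_mem A hi
      exact ⟨⟨A i, hAi⟩, Finset.mem_attach _ _, Finset.mem_filter.mpr ⟨hi, rfl⟩⟩
  · -- right inverse
    intro g hg
    rw [Finset.mem_pi] at hg
    funext ξ hξ
    have hsub : ∀ ξ' (hξ' : ξ' ∈ S.toFinset),
        g ξ' hξ' ⊆ Finset.univ.filter (fun i => A i = ξ') := by
      intro ξ' hξ'
      exact (Finset.mem_powersetCard.mp (hg ξ' hξ')).1
    ext i
    rw [Finset.mem_filter, Finset.mem_biUnion]
    constructor
    · rintro ⟨⟨⟨ξv, hξv⟩, -, hi⟩, hA⟩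
      have hAv : A i = ξv := (Finset.mem_filter.mp (hsub ξv hξv hi)).2
      have heq : ξv = ξ := by rw [← hAv, hA]
      subst heq
      exact hi
    · intro hi
      refine ⟨⟨⟨ξ, hξ⟩, Finset.mem_attach _ _, hi⟩, ?_⟩
      exact (Finset.mem_filter.mp (hsub ξ hξ hi)).2

lemma vdm {R : Type*} [CommRing R] [IsDomain R] {ι : Type*} [DecidableEq ι] (T : Finset ι)
    (b : ι → R) (c : ι → R) (hb0 : ∀ i ∈ T, b i ≠ 0)
    (hinj : ∀ i ∈ T, ∀ j ∈ T, b i = b j → i = j)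
    (h : ∀ l : ℕ, 1 ≤ l → ∑ i ∈ T, c i * b i ^ l = 0) :
    ∀ i ∈ T, c i = 0 := by
  induction T using Finset.induction generalizing c with
  | empty => simp
  | @insert a s ha ih =>
    have hb0' : ∀ i ∈ s, b i ≠ 0 := fun i hi => hb0 i (Finset.mem_insert_of_mem hi)
    have hinj' : ∀ i ∈ s, ∀ j ∈ s, b i = b j → i = j := fun i hi j hj =>
      hinj i (Finset.mem_insert_of_mem hi) j (Finset.mem_insert_of_mem hj)
    have h' : ∀ l : ℕ, 1 ≤ l → ∑ i ∈ s, (c i * (b a - b i)) * b i ^ l = 0 := by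
      intro l hl
      have e1 := h l hl
      have e2 := h (l + 1) (by omega)
      have key : ∑ i ∈ insert a s, (c i * (b a - b i)) * b i ^ l = 0 := by
        have expand : ∑ i ∈ insert a s, (c i * (b a - b i)) * b i ^ l
            = b a * ∑ i ∈ insert a s, c i * b i ^ l
              - ∑ i ∈ insert a s, c i * b i ^ (l + 1) := by
          rw [Finset.mul_sum, ← Finset.sum_sub_distrib]
          apply Finset.sum_congr rfl
          intro i _
          ring
        rw [expand, e1, e2, mul_zero, sub_zero]
      rwa [Finset.sum_insert ha, sub_self, mul_zero, zero_mul, zero_add] at key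
    have hcs : ∀ i ∈ s, c i = 0 := by
      intro i hi
      have := ih (fun i => c i * (b a - b i)) hb0' hinj' h' i hi
      rcases mul_eq_zero.mp this with h1 | h1
      · exact h1
      · exfalso
        have : b a = b i := sub_eq_zero.mp h1
        exact ha (hinj a (Finset.mem_insert_self a s) i (Finset.mem_insert_of_mem hi) this ▸ hi)
    intro i hi
    rcases Finset.mem_insert.mp hi with rfl | hi'
    · have h1 := h 1 le_rfl
      rw [Finset.sum_insert ha, Finset.sum_eq_zero (fun j hj => by
        rw [hcs j hj, zero_mul]), add_zero, pow_one] at h1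
      rcases mul_eq_zero.mp h1 with h2 | h2
      · exact h2
      · exact absurd h2 (hb0 i (Finset.mem_insert_self i s))
    · exact hcs i hi'

lemma even_nsmul_zero {k : ℕ} {c : ℕ} (hc : Even c) (x : Rk k) : c • x = 0 := by
  obtain ⟨m, rfl⟩ := hc
  rw [add_nsmul]
  exact CharTwo.add_self_eq_zero _

lemma key_identity {k n : ℕ} {V : Type} [Fintype V] (A : V → Fin n → Rk k) (r l : ℕ)
    (𝒮 : Finset (Multiset (Rk k)))
    (hmaps : ∀ p : V, ∀ t ∈ Finset.powersetCard r (Finset.univ : Finset (Fin n)),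
      Multiset.map (A p) t.val ∈ 𝒮)
    (hcard : ∀ S ∈ 𝒮, Multiset.card S = r) :
    ∑ p : V, esig n r (fun i => A p i ^ l)
      = ∑ S ∈ 𝒮, (∑ p : V, Ifun S (A p)) • (S.prod ^ l) := by
  classical
  have hp : ∀ p : V, esig n r (fun i => A p i ^ l)
      = ∑ S ∈ 𝒮, (Ifun S (A p)) • (S.prod ^ l) := by
    intro p
    rw [esig]
    have e1 : ∀ t ∈ Finset.powersetCard r (Finset.univ : Finset (Fin n)),
        ∏ i ∈ t, A p i ^ l = ((Multiset.map (A p) t.val).prod) ^ l := by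
      intro t _
      rw [Finset.prod_pow, Finset.prod_eq_multiset_prod]
    rw [Finset.sum_congr rfl e1,
      ← Finset.sum_fiberwise_of_maps_to (hmaps p)
        (fun t => ((Multiset.map (A p) t.val).prod) ^ l)]
    apply Finset.sum_congr rfl
    intro S hS
    have e2 : ∀ t ∈ (Finset.powersetCard r (Finset.univ : Finset (Fin n))).filter
        (fun t => Multiset.map (A p) t.val = S),
        ((Multiset.map (A p) t.val).prod) ^ l = S.prod ^ l := by
      intro t ht
      rw [(Finset.mem_filter.mp ht).2]
    rw [Finset.sum_congr rfl e2, Finset.sum_const, countLemma (A p) S (hcard S hS)]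
  rw [Finset.sum_congr rfl (fun p _ => hp p), Finset.sum_comm]
  apply Finset.sum_congr rfl
  intro S _
  rw [← Finset.sum_smul]

end Aux

/-- a `ρ`-cellular family of valence `nρ > 1` satisfies property (P)
iff `∑_{p ∈ V} σ_r(A_p^{(l)}) = 0` for all `l ≥ 0` and `1 ≤ r ≤ nρ - 1`. -/
theorem stmt_6 (k n : ℕ) (hk : 1 ≤ k) (hn : 1 ≤ n)
    (ρ : Rk k) (hρ0 : ρ ≠ 0) (hρ1 : ρ.IsHomogeneous 1)
    (nρ : ℕ) (hnρ : 1 < nρ)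
    (V : Type) [Fintype V] (A : V → Fin n → Rk k)
    (hcell : Cellular ρ nρ A) :
    PropP nρ A ↔
      (∀ l r : ℕ, 1 ≤ r → r ≤ nρ - 1 →
        ∑ p : V, esig n r (fun i => A p i ^ l) = 0) := by
  classical
  obtain ⟨hV, hforms, hval, hcong⟩ := hcell
  constructor
  · -- Property (P) implies the vanishing of the symmetric-function sums
    intro hP l r hr1 hr2
    set 𝒮 : Finset (Multiset (Rk k)) := (Finset.univ : Finset V).biUnion
      (fun p => (Finset.powersetCard r (Finset.univ : Finset (Fin n))).image
        (fun t : Finset (Fin n) => Multiset.map (A p) t.val)) with h𝒮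
    have hmaps : ∀ p : V, ∀ t ∈ Finset.powersetCard r (Finset.univ : Finset (Fin n)),
        Multiset.map (A p) t.val ∈ 𝒮 := by
      intro p t ht
      exact Finset.mem_biUnion.mpr ⟨p, Finset.mem_univ p, Finset.mem_image_of_mem _ ht⟩
    have hcard : ∀ S ∈ 𝒮, Multiset.card S = r := by
      intro S hS
      obtain ⟨p, -, hS'⟩ := Finset.mem_biUnion.mp hS
      obtain ⟨t, ht, rfl⟩ := Finset.mem_image.mp hS'
      rw [Multiset.card_map]
      exact Finset.mem_powersetCard_univ.mp ht
    have helts : ∀ S ∈ 𝒮, ∀ ξ ∈ S, ξ ≠ 0 ∧ ξ.IsHomogeneous 1 := by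
      intro S hS ξ hξ
      obtain ⟨p, -, hS'⟩ := Finset.mem_biUnion.mp hS
      obtain ⟨t, ht, rfl⟩ := Finset.mem_image.mp hS'
      obtain ⟨i, -, rfl⟩ := Multiset.mem_map.mp hξ
      exact hforms p i
    rw [key_identity A r l 𝒮 hmaps hcard]
    apply Finset.sum_eq_zero
    intro S hS
    exact even_nsmul_zero (hP S (helts S hS) (by rw [hcard S hS]; exact hr2)) _
  · -- The vanishing of the sums implies property (P)
    intro hR S hSel hScard
    by_cases h0 : S = 0
    · subst h0
      have : ∀ p : V, Ifun (0 : Multiset (Rk k)) (A p) = 1 := by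
        intro p
        rw [Ifun]
        simp
      rw [Finset.sum_congr rfl (fun p _ => this p), Finset.sum_const, smul_eq_mul, mul_one,
        Finset.card_univ]
      exact hV
    · set r : ℕ := Multiset.card S with hr
      have hr1 : 1 ≤ r := by
        rw [hr]
        exact Multiset.card_pos.mpr h0
      set 𝒮 : Finset (Multiset (Rk k)) := ((Finset.univ : Finset V).biUnion
        (fun p => (Finset.powersetCard r (Finset.univ : Finset (Fin n))).image
          (fun t : Finset (Fin n) => Multiset.map (A p) t.val))) ∪ {S} with h𝒮
      have hmaps : ∀ p : V, ∀ t ∈ Finset.powersetCard r (Finset.univ : Finset (Fin n)),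
          Multiset.map (A p) t.val ∈ 𝒮 := by
        intro p t ht
        exact Finset.mem_union_left _ (Finset.mem_biUnion.mpr
          ⟨p, Finset.mem_univ p, Finset.mem_image_of_mem _ ht⟩)
      have hScases : ∀ S' ∈ 𝒮,
          (∃ p : V, ∃ t ∈ Finset.powersetCard r (Finset.univ : Finset (Fin n)),
            S' = Multiset.map (A p) t.val) ∨ S' = S := by
        intro S' hS'
        rcases Finset.mem_union.mp hS' with h | h
        · obtain ⟨p, -, hS''⟩ := Finset.mem_biUnion.mp h
          obtain ⟨t, ht, rfl⟩ := Finset.mem_image.mp hS''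
          exact Or.inl ⟨p, t, ht, rfl⟩
        · exact Or.inr (Finset.mem_singleton.mp h)
      have hcard : ∀ S' ∈ 𝒮, Multiset.card S' = r := by
        intro S' hS'
        rcases hScases S' hS' with ⟨p, t, ht, rfl⟩ | rfl
        · rw [Multiset.card_map]
          exact Finset.mem_powersetCard_univ.mp ht
        · rfl
      have helts : ∀ S' ∈ 𝒮, ∀ ξ ∈ S', ξ ≠ 0 ∧ ξ.IsHomogeneous 1 := by
        intro S' hS' ξ hξ
        rcases hScases S' hS' with ⟨p, t, ht, rfl⟩ | rfl
        · obtain ⟨i, -, rfl⟩ := Multiset.mem_map.mp hξ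
          exact hforms p i
        · exact hSel ξ hξ
      have hzero : ∀ l : ℕ, 1 ≤ l →
          ∑ S' ∈ 𝒮, ((∑ p : V, Ifun S' (A p) : ℕ) : Rk k) * (S'.prod) ^ l = 0 := by
        intro l hl
        have hid := key_identity A r l 𝒮 hmaps hcard
        rw [hR l r hr1 (hr ▸ hScard)] at hid
        have hconv : ∑ S' ∈ 𝒮, ((∑ p : V, Ifun S' (A p) : ℕ) : Rk k) * (S'.prod) ^ l
            = ∑ S' ∈ 𝒮, (∑ p : V, Ifun S' (A p)) • (S'.prod) ^ l :=
          Finset.sum_congr rfl (fun S' _ => (nsmul_eq_mul _ _).symm)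
        rw [hconv, ← hid]
      have hvdm := vdm 𝒮 (fun S' => S'.prod)
        (fun S' => ((∑ p : V, Ifun S' (A p) : ℕ) : Rk k))
        (fun S' hS' => Multiset.prod_ne_zero (fun hcon => (helts S' hS' 0 hcon).1 rfl))
        (fun S1 hS1 S2 hS2 hprod => prod_inj (helts S1 hS1) (helts S2 hS2) hprod)
        hzero
      have hmem : S ∈ 𝒮 := Finset.mem_union_right _ (Finset.mem_singleton_self S)
      have := hvdm S hmem
      rw [CharP.cast_eq_zero_iff (Rk k) 2] at this
      exact even_iff_two_dvd.mpr this

end
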